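/- Suppose y₁ ≥ y₂ ≥ ⋯ ≥ y_n ≥ 0 and 0 = t₀ ≤ t₁ ≤ t₂ ≤ ⋯ ≤ t_n. Let A = Σ_{i=1}^n y_i (t_i - t_{i-1}). Then Σ_{i=1}^n ( t_{i-1} y_i ln(t_{i-1} y_i) - t_i y_i ln(t_i y_i) ) ≥ -A ln A, with the convention 0 ln 0 = 0. -/

import Mathlib

open Finset

private lemma f_incr {a b c : ℝ} (hc : 0 ≤ c) (hca : c ≤ a) (hb : 0 ≤ b) :
    (c + b) * Real.log (c + b) + a * Real.log a
      ≤ (a + b) * Real.log (a + b) + c * Real.log c := by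
  rcases eq_or_lt_of_le hb with rfl | hb
  · simp only [add_zero]; linarith
  rcases eq_or_lt_of_le hca with rfl | hca
  · linarith
  have hd0 : 0 < a - c + b := by linarith
  have ha : 0 ≤ a := le_trans hc hca.le
  have hmu : (0:ℝ) ≤ (a - c) / (a - c + b) := div_nonneg (by linarith) hd0.le
  have hlam : (0:ℝ) ≤ b / (a - c + b) := div_nonneg hb.le hd0.le
  have hsum : (a - c) / (a - c + b) + b / (a - c + b) = 1 := by field_simp
  have hab : (0:ℝ) ≤ a + b := by linarith
  have h1 := Real.convexOn_mul_log.2 (Set.mem_Ici.2 hc) (Set.mem_Ici.2 hab) hmu hlam hsum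
  have h2 := Real.convexOn_mul_log.2 (Set.mem_Ici.2 hc) (Set.mem_Ici.2 hab)
      hlam hmu (by linarith)
  simp only [smul_eq_mul] at h1 h2
  have e1 : (a - c) / (a - c + b) * c + b / (a - c + b) * (a + b) = c + b := by
    rw [div_mul_eq_mul_div, div_mul_eq_mul_div, ← add_div,
        div_eq_iff hd0.ne']; ring
  have e2 : b / (a - c + b) * c + (a - c) / (a - c + b) * (a + b) = a := by
    rw [div_mul_eq_mul_div, div_mul_eq_mul_div, ← add_div,
        div_eq_iff hd0.ne']; ring
  rw [e1] at h1
  rw [e2] at h2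
  have key1 : (a - c) / (a - c + b) * (c * Real.log c)
      + b / (a - c + b) * (c * Real.log c) = c * Real.log c := by
    rw [← add_mul, hsum, one_mul]
  have key2 : (a - c) / (a - c + b) * ((a + b) * Real.log (a + b))
      + b / (a - c + b) * ((a + b) * Real.log (a + b))
      = (a + b) * Real.log (a + b) := by
    rw [← add_mul, hsum, one_mul]
  linarith [h1, h2, key1, key2]

private lemma telescope (t : ℕ → ℝ) (n : ℕ) :
    ∑ i ∈ Finset.Icc 1 n, (t i - t (i - 1)) = t n - t 0 := by
  induction n with
  | zero => simp
  | succ n ih =>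
      rw [Finset.sum_Icc_succ_top (by omega : 1 ≤ n + 1), ih]
      simp

theorem step_sum_log_inequality (n : ℕ) (y t : ℕ → ℝ)
    (hy : ∀ i j, 1 ≤ i → i ≤ j → j ≤ n → y j ≤ y i)
    (hy0 : ∀ i, 1 ≤ i → i ≤ n → 0 ≤ y i)
    (ht0 : t 0 = 0)
    (ht : ∀ i j, i ≤ j → j ≤ n → t i ≤ t j)
    (A : ℝ) (hA : A = ∑ i ∈ Finset.Icc 1 n, y i * (t i - t (i - 1))) :
    (∑ i ∈ Finset.Icc 1 n,
        (t (i - 1) * y i * Real.log (t (i - 1) * y i)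
          - t i * y i * Real.log (t i * y i)))
      ≥ -A * Real.log A := by
  subst hA
  induction n with
  | zero => simp
  | succ n ih =>
    have hy' : ∀ i j, 1 ≤ i → i ≤ j → j ≤ n → y j ≤ y i :=
      fun i j h1 h2 h3 => hy i j h1 h2 (by omega)
    have hy0' : ∀ i, 1 ≤ i → i ≤ n → 0 ≤ y i :=
      fun i h1 h2 => hy0 i h1 (by omega)
    have ht' : ∀ i j, i ≤ j → j ≤ n → t i ≤ t j :=
      fun i j h1 h2 => ht i j h1 (by omega)
    have IH := ih hy' hy0' ht'
    set An := ∑ i ∈ Finset.Icc 1 n, y i * (t i - t (i - 1)) with hAn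
    set b := y (n + 1) * (t (n + 1) - t n) with hb_def
    set c := t n * y (n + 1) with hc_def
    have hyn1 : 0 ≤ y (n + 1) := hy0 (n + 1) (by omega) le_rfl
    have htn : 0 ≤ t n := ht0 ▸ ht 0 n (by omega) (by omega)
    have hb : 0 ≤ b := mul_nonneg hyn1 (by linarith [ht n (n + 1) (by omega) le_rfl])
    have hc : 0 ≤ c := mul_nonneg htn hyn1
    have hca : c ≤ An := by
      have h1 : ∑ i ∈ Finset.Icc 1 n, y (n + 1) * (t i - t (i - 1)) ≤ An := by
        apply Finset.sum_le_sum
        intro i hi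
        rw [Finset.mem_Icc] at hi
        have hΔ : 0 ≤ t i - t (i - 1) :=
          sub_nonneg.2 (ht (i - 1) i (by omega) (by omega))
        exact mul_le_mul_of_nonneg_right (hy i (n + 1) hi.1 (by omega) le_rfl) hΔ
      calc c = y (n + 1) * (t n - t 0) := by rw [ht0]; ring
        _ = ∑ i ∈ Finset.Icc 1 n, y (n + 1) * (t i - t (i - 1)) := by
            rw [← Finset.mul_sum, telescope]
        _ ≤ An := h1
    have key := f_incr hc hca hb
    rw [Finset.sum_Icc_succ_top (by omega : 1 ≤ n + 1),
        Finset.sum_Icc_succ_top (by omega : 1 ≤ n + 1)]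
    have hsimp : (n + 1 : ℕ) - 1 = n := by omega
    rw [hsimp]
    have hcb : t (n + 1) * y (n + 1) = c + b := by rw [hc_def, hb_def]; ring
    rw [hcb]
    have hAb : y (n + 1) * (t (n + 1) - t n) = b := rfl
    rw [hAb]
    have : t n * y (n + 1) = c := rfl
    rw [this]
    linarith [IH, key]
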